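/- Let X and Y be Hilbert spaces, T : X → Y a bounded linear operator with a least-squares projection approximation {(X_n, T_n)}, and let Q_n := T† P_{T(X_n)} T be the bounded idempotent with Q_n x the unique u ∈ N(T)^⊥ such that Tu = P_{T(X_n)} T x. Then for every n: 1 ≤ ‖I − Q_n‖ < +∞, and ‖P_{T*T(X_n)} − P_{P_{N(T)^⊥}(X_n)}‖ = √(1 − ‖I − Q_n‖⁻²) ∈ [0, 1). In particular, the gap between T†T(X_n) = P_{N(T)^⊥}(X_n) and T*T(X_n) is strictly less than 1 for every n. -/

import Mathlib

open Filter Topology Metric Submodule ContinuousLinearMap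

/-- Orthogonal projection onto a subspace `K` (as an operator `H →L[ℝ] H`),
defined whenever `K` admits orthogonal projections (e.g. `K` closed). -/
noncomputable def orthProj {H : Type*} [NormedAddCommGroup H] [InnerProductSpace ℝ H]
    (K : Submodule ℝ H) : H →L[ℝ] H :=
  open scoped Classical in
  if h : HasOrthogonalProjection K then
    haveI := h
    K.subtypeL.comp (orthogonalProjection K)
  else 0

/-- `δ(M,N) = sup {dist(x,N) : x ∈ M, ‖x‖ = 1}` (0 if `M = {0}`, as `sSup ∅ = 0` in `ℝ`). -/
noncomputable def deltaSub {H : Type*} [NormedAddCommGroup H] [InnerProductSpace ℝ H]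
    (M N : Submodule ℝ H) : ℝ :=
  sSup {d : ℝ | ∃ x ∈ M, ‖x‖ = 1 ∧ d = Metric.infDist x (N : Set H)}

/-- The gap between two subspaces. -/
noncomputable def gapSub {H : Type*} [NormedAddCommGroup H] [InnerProductSpace ℝ H]
    (M N : Submodule ℝ H) : ℝ :=
  max (deltaSub M N) (deltaSub N M)

section OrthProjLemmas

open scoped RealInnerProductSpace

variable {H : Type*} [NormedAddCommGroup H] [InnerProductSpace ℝ H]

lemma orthProj_apply (K : Submodule ℝ H) [h : HasOrthogonalProjection K] (x : H) :
    orthProj K x = (orthogonalProjection K x : H) := by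
  unfold orthProj
  rw [dif_pos h]
  rfl

lemma orthProj_mem (K : Submodule ℝ H) [HasOrthogonalProjection K] (x : H) :
    orthProj K x ∈ K := by rw [orthProj_apply]; exact (orthogonalProjection K x).2

lemma sub_orthProj_mem (K : Submodule ℝ H) [HasOrthogonalProjection K] (x : H) :
    x - orthProj K x ∈ Kᗮ := by
  rw [orthProj_apply]; exact K.sub_starProjection_mem_orthogonal x

lemma orthProj_eq_self (K : Submodule ℝ H) [HasOrthogonalProjection K] {x : H} (h : x ∈ K) :
    orthProj K x = x := by
  rw [orthProj_apply]
  exact K.starProjection_eq_self_iff.mpr h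

lemma orthProj_eq_zero (K : Submodule ℝ H) [HasOrthogonalProjection K] {x : H} (h : x ∈ Kᗮ) :
    orthProj K x = 0 := by
  rw [orthProj_apply]
  simp [orthogonalProjection_eq_zero_iff.mpr h]

lemma orthProj_bot : orthProj (⊥ : Submodule ℝ H) = 0 := by
  ext x
  have := orthProj_mem (⊥ : Submodule ℝ H) x
  simpa using this

lemma inner_orthProj_self (K : Submodule ℝ H) [HasOrthogonalProjection K] (x : H) :
    ⟪orthProj K x, x⟫ = ‖orthProj K x‖ ^ 2 := by
  have h : ⟪orthProj K x, x - orthProj K x⟫ = 0 := by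
    rw [real_inner_comm]
    exact (Submodule.mem_orthogonal' K _).mp (sub_orthProj_mem K x) _ (orthProj_mem K x)
  rw [inner_sub_right] at h
  have h2 : ⟪orthProj K x, orthProj K x⟫ = ‖orthProj K x‖ ^ 2 := real_inner_self_eq_norm_sq _
  linarith

lemma inner_orthProj (K : Submodule ℝ H) [HasOrthogonalProjection K] (x y : H) :
    ⟪orthProj K x, y⟫ = ⟪x, orthProj K y⟫ := by
  have h1 : ⟪orthProj K x, y - orthProj K y⟫ = 0 := by
    rw [real_inner_comm]
    exact (Submodule.mem_orthogonal' K _).mp (sub_orthProj_mem K y) _ (orthProj_mem K x)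
  have h2 : ⟪orthProj K y, x - orthProj K x⟫ = 0 := by
    rw [real_inner_comm]
    exact (Submodule.mem_orthogonal' K _).mp (sub_orthProj_mem K x) _ (orthProj_mem K y)
  rw [inner_sub_right] at h1 h2
  have h3 : ⟪x, orthProj K y⟫ = ⟪orthProj K y, x⟫ := real_inner_comm _ _
  have h4 : ⟪orthProj K x, orthProj K y⟫ = ⟪orthProj K y, orthProj K x⟫ := real_inner_comm _ _
  linarith

end OrthProjLemmas

section KeyLemmas

open scoped RealInnerProductSpace

variable {H : Type*} [NormedAddCommGroup H] [InnerProductSpace ℝ H]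

lemma aux_L1 (u v : H) (c : ℝ) (h : |⟪u, v⟫| ≤ c * ‖u‖ * ‖v‖) :
    (1 - c ^ 2) * ‖u‖ ^ 2 ≤ ‖u + v‖ ^ 2 := by
  have hexp := norm_add_sq_real u v
  have h1 := abs_le.mp h
  nlinarith [sq_nonneg (c * ‖u‖ - ‖v‖)]

lemma aux_L3 (E : H →L[ℝ] H) (hE : ∀ x, E (E x) = E x) (h0 : E ≠ 0) : 1 ≤ ‖E‖ := by
  obtain ⟨x, hx⟩ : ∃ x, E x ≠ 0 := by
    by_contra h
    push_neg at h
    exact h0 (ContinuousLinearMap.ext fun x => by simp [h x])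
  have h1 : ‖E x‖ ≤ ‖E‖ * ‖E x‖ := by
    conv_lhs => rw [← hE x]
    exact E.le_opNorm _
  have h2 : 0 < ‖E x‖ := norm_pos_iff.mpr hx
  exact le_of_mul_le_mul_right (by linarith) h2

lemma aux_L2 (E : H →L[ℝ] H) (hE1 : 1 ≤ ‖E‖) (k p : H) (hk : E k = 0) (hp : E p = p)
    (hpk : ⟪p, k⟫ = ‖p‖ ^ 2) :
    ‖p‖ ^ 2 ≤ (1 - (‖E‖ ^ 2)⁻¹) * ‖k‖ ^ 2 := by
  set a := ‖E‖ with ha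
  have ha1 : (1:ℝ) ≤ a ^ 2 := by nlinarith
  have ha0 : (0:ℝ) < a ^ 2 := by linarith
  have hainv : (a ^ 2)⁻¹ ≤ 1 := by
    rw [inv_le_one_iff₀]; right; exact ha1
  rcases eq_or_ne p 0 with hp0 | hp0
  · have : (0:ℝ) ≤ (1 - (a ^ 2)⁻¹) * ‖k‖ ^ 2 := by
      have h2 : (0:ℝ) ≤ ‖k‖ ^ 2 := by positivity
      nlinarith
    simpa [hp0] using this
  have hpn : (0:ℝ) < ‖p‖ := norm_pos_iff.mpr hp0
  have hdp : (0:ℝ) < ‖p‖ ^ 2 := by positivity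
  have hpk' : ‖p‖ ≤ ‖k‖ := by
    have h3 := real_inner_le_norm p k
    nlinarith
  have hk0 : (0:ℝ) < ‖k‖ ^ 2 := by nlinarith
  set s : ℝ := ‖k‖ ^ 2 / ‖p‖ ^ 2 with hs
  have hs1 : s * ‖p‖ ^ 2 = ‖k‖ ^ 2 := by rw [hs, div_mul_cancel₀ _ hdp.ne']
  have hspos : 0 < s := by positivity
  set y := s • p - k with hy
  have hEy : E y = s • p := by simp [hy, map_sub, map_smul, hk, hp]
  have hny : ‖y‖ ^ 2 = s ^ 2 * ‖p‖ ^ 2 - 2 * s * ‖p‖ ^ 2 + ‖k‖ ^ 2 := by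
    have := norm_sub_sq_real (s • p) k
    rw [this, real_inner_smul_left, hpk, norm_smul]
    simp [mul_pow, abs_of_pos hspos]
    ring
  have hle : ‖E y‖ ≤ a * ‖y‖ := E.le_opNorm y
  have hle2 : s ^ 2 * ‖p‖ ^ 2 ≤ a ^ 2 * ‖y‖ ^ 2 := by
    have h1 : ‖E y‖ ^ 2 ≤ (a * ‖y‖) ^ 2 := by
      have h0 : 0 ≤ ‖E y‖ := norm_nonneg _
      nlinarith
    rw [hEy, norm_smul] at h1
    simp [mul_pow, abs_of_pos hspos] at h1 ⊢
    nlinarith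
  have hy2 : ‖y‖ ^ 2 = s * ‖p‖ ^ 2 * (s - 1) := by rw [hny, ← hs1]; ring
  rw [hy2] at hle2
  have key : s ≤ a ^ 2 * (s - 1) := by
    have h := hle2
    have hps : 0 < s * ‖p‖ ^ 2 := by positivity
    nlinarith
  rw [← hs1]
  have goal' : a ^ 2 * ‖p‖ ^ 2 ≤ (a ^ 2 - 1) * (s * ‖p‖ ^ 2) := by nlinarith
  have expand : (1 - (a ^ 2)⁻¹) * (s * ‖p‖ ^ 2) = ((a ^ 2 - 1) * (s * ‖p‖ ^ 2)) / a ^ 2 := by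
    field_simp
  rw [expand, le_div_iff₀ ha0]
  linear_combination goal'

lemma sq_le_imp (c x y : ℝ) (hc : 0 ≤ c) (hx : 0 ≤ x) (hy : 0 ≤ y) (h : x ^ 2 ≤ c * y ^ 2) :
    x ≤ Real.sqrt c * y := by
  have h1 : x = Real.sqrt (x ^ 2) := (Real.sqrt_sq hx).symm
  rw [h1]
  calc Real.sqrt (x ^ 2) ≤ Real.sqrt (c * y ^ 2) := Real.sqrt_le_sqrt h
    _ = Real.sqrt c * y := by rw [Real.sqrt_mul hc, Real.sqrt_sq hy]

lemma one_sub_inv_nonneg (a : ℝ) (h : 1 ≤ a) : 0 ≤ 1 - (a ^ 2)⁻¹ := by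
  have h1 : (1:ℝ) ≤ a ^ 2 := by nlinarith
  have : (a ^ 2)⁻¹ ≤ 1 := by rw [inv_le_one_iff₀]; right; exact h1
  linarith

/-- The key abstract identity for an oblique projection `Q` with range `M`
and kernel `Nᗮ` on a real Hilbert space. -/
lemma buck {H : Type*} [NormedAddCommGroup H] [InnerProductSpace ℝ H] [CompleteSpace H]
    [Nontrivial H]
    (Q : H →L[ℝ] H) (M N : Submodule ℝ H)
    [HasOrthogonalProjection M] [HasOrthogonalProjection N]
    (hQM : ∀ x, Q x ∈ M) (hM : ∀ m ∈ M, Q m = m)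
    (hker : ∀ x, Q x = 0 ↔ x ∈ Nᗮ) (hQ1 : Q ≠ 1) :
    1 ≤ ‖(1 : H →L[ℝ] H) - Q‖ ∧
      ‖orthProj M - orthProj N‖ = Real.sqrt (1 - (‖(1 : H →L[ℝ] H) - Q‖ ^ 2)⁻¹) := by
  have hQQ : ∀ x, Q (Q x) = Q x := fun x => hM _ (hQM x)
  set E := (1 : H →L[ℝ] H) - Q with hE
  have hEapp : ∀ x, E x = x - Q x := fun x => rfl
  have hEidem : ∀ x, E (E x) = E x := by
    intro x
    rw [hEapp (E x), hEapp x, map_sub, hQQ, sub_self, sub_zero]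
  have hE0 : E ≠ 0 := by
    intro h
    exact hQ1 (sub_eq_zero.mp h).symm
  have ha1 : 1 ≤ ‖E‖ := aux_L3 E hEidem hE0
  refine ⟨ha1, ?_⟩
  by_cases hQ0 : Q = 0
  · have hM0 : M = ⊥ := by
      rw [Submodule.eq_bot_iff]
      intro m hm
      have := hM m hm
      rw [hQ0] at this
      simpa using this.symm
    have hN0 : N = ⊥ := by
      have htop : Nᗮ = ⊤ := by
        rw [Submodule.eq_top_iff']
        intro x
        exact (hker x).mp (by rw [hQ0]; rfl)
      have hle := Submodule.le_orthogonal_orthogonal N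
      rw [htop, Submodule.top_orthogonal_eq_bot] at hle
      exact le_bot_iff.mp hle
    have hEnorm : ‖E‖ = 1 := by
      rw [hE, hQ0, sub_zero]
      exact ContinuousLinearMap.norm_id
    rw [hM0, hN0, orthProj_bot, sub_self, norm_zero, hEnorm]
    norm_num
  · have hb1 : 1 ≤ ‖Q‖ := aux_L3 Q hQQ hQ0
    have hQk : ∀ k ∈ Nᗮ, Q k = 0 := fun k hk => (hker k).mpr hk
    have hsubK : ∀ x, x - Q x ∈ Nᗮ := fun x =>
      (hker _).mp (by rw [map_sub, hQQ, sub_self])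
    have step1 : ∀ k ∈ Nᗮ, ‖orthProj M k‖ ^ 2 ≤ (1 - (‖Q‖ ^ 2)⁻¹) * ‖k‖ ^ 2 := by
      intro k hk
      exact aux_L2 Q hb1 k (orthProj M k) (hQk k hk) (hM _ (orthProj_mem M k))
        (inner_orthProj_self M k)
    have step2 : ∀ m ∈ M, ‖orthProj Nᗮ m‖ ^ 2 ≤ (1 - (‖E‖ ^ 2)⁻¹) * ‖m‖ ^ 2 := by
      intro m hm
      refine aux_L2 E ha1 m (orthProj Nᗮ m) ?_ ?_ (inner_orthProj_self Nᗮ m)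
      · rw [hEapp, hM m hm, sub_self]
      · rw [hEapp, hQk _ (orthProj_mem Nᗮ m), sub_zero]
    have hmk_b : ∀ m ∈ M, ∀ k ∈ Nᗮ,
        |⟪m, k⟫| ≤ Real.sqrt (1 - (‖Q‖ ^ 2)⁻¹) * ‖m‖ * ‖k‖ := by
      intro m hm k hk
      have h1 : ⟪m, k⟫ = ⟪m, orthProj M k⟫ := by
        conv_lhs => rw [← orthProj_eq_self M hm]
        rw [inner_orthProj]
      rw [h1]
      calc |⟪m, orthProj M k⟫| ≤ ‖m‖ * ‖orthProj M k‖ := abs_real_inner_le_norm _ _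
        _ ≤ ‖m‖ * (Real.sqrt (1 - (‖Q‖ ^ 2)⁻¹) * ‖k‖) := by
            refine mul_le_mul_of_nonneg_left ?_ (norm_nonneg m)
            exact sq_le_imp _ _ _ (one_sub_inv_nonneg _ hb1) (norm_nonneg _)
              (norm_nonneg _) (step1 k hk)
        _ = Real.sqrt (1 - (‖Q‖ ^ 2)⁻¹) * ‖m‖ * ‖k‖ := by ring
    have hmk_a : ∀ m ∈ M, ∀ k ∈ Nᗮ,
        |⟪m, k⟫| ≤ Real.sqrt (1 - (‖E‖ ^ 2)⁻¹) * ‖m‖ * ‖k‖ := by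
      intro m hm k hk
      have h1 : ⟪m, k⟫ = ⟪orthProj Nᗮ m, k⟫ := by
        conv_lhs => rw [← orthProj_eq_self Nᗮ hk]
        exact (inner_orthProj Nᗮ m k).symm
      rw [h1]
      calc |⟪orthProj Nᗮ m, k⟫| ≤ ‖orthProj Nᗮ m‖ * ‖k‖ := abs_real_inner_le_norm _ _
        _ ≤ (Real.sqrt (1 - (‖E‖ ^ 2)⁻¹) * ‖m‖) * ‖k‖ := by
            refine mul_le_mul_of_nonneg_right ?_ (norm_nonneg k)
            exact sq_le_imp _ _ _ (one_sub_inv_nonneg _ ha1) (norm_nonneg _)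
              (norm_nonneg _) (step2 m hm)
        _ = Real.sqrt (1 - (‖E‖ ^ 2)⁻¹) * ‖m‖ * ‖k‖ := by ring
    -- a ≤ b
    have hab : ‖E‖ ≤ ‖Q‖ := by
      refine ContinuousLinearMap.opNorm_le_bound _ (by linarith) ?_
      intro x
      have hin : |⟪x - Q x, Q x⟫| ≤ Real.sqrt (1 - (‖Q‖ ^ 2)⁻¹) * ‖x - Q x‖ * ‖Q x‖ := by
        rw [real_inner_comm]
        calc |⟪Q x, x - Q x⟫| ≤ Real.sqrt (1 - (‖Q‖ ^ 2)⁻¹) * ‖Q x‖ * ‖x - Q x‖ :=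
              hmk_b (Q x) (hQM x) (x - Q x) (hsubK x)
          _ = Real.sqrt (1 - (‖Q‖ ^ 2)⁻¹) * ‖x - Q x‖ * ‖Q x‖ := by ring
      have hL := aux_L1 (x - Q x) (Q x) _ hin
      rw [sub_add_cancel] at hL
      rw [Real.sq_sqrt (one_sub_inv_nonneg _ hb1)] at hL
      have hb0 : (0:ℝ) < ‖Q‖ ^ 2 := by nlinarith
      have h2 : ‖x - Q x‖ ^ 2 ≤ ‖Q‖ ^ 2 * ‖x‖ ^ 2 := by
        have h3 : (‖Q‖ ^ 2)⁻¹ * ‖x - Q x‖ ^ 2 ≤ ‖x‖ ^ 2 := by nlinarith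
        calc ‖x - Q x‖ ^ 2 = ‖Q‖ ^ 2 * ((‖Q‖ ^ 2)⁻¹ * ‖x - Q x‖ ^ 2) := by field_simp
          _ ≤ ‖Q‖ ^ 2 * ‖x‖ ^ 2 := mul_le_mul_of_nonneg_left h3 (le_of_lt hb0)
      have h4 := sq_le_imp (‖Q‖ ^ 2) ‖x - Q x‖ ‖x‖ (by positivity) (norm_nonneg _)
        (norm_nonneg _) h2
      rw [Real.sqrt_sq (by linarith)] at h4
      rw [hEapp]
      exact h4
    -- b ≤ a
    have hba : ‖Q‖ ≤ ‖E‖ := by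
      refine ContinuousLinearMap.opNorm_le_bound _ (by linarith) ?_
      intro x
      have hin : |⟪Q x, x - Q x⟫| ≤ Real.sqrt (1 - (‖E‖ ^ 2)⁻¹) * ‖Q x‖ * ‖x - Q x‖ :=
        hmk_a (Q x) (hQM x) (x - Q x) (hsubK x)
      have hL := aux_L1 (Q x) (x - Q x) _ hin
      have hxx : Q x + (x - Q x) = x := by abel
      rw [hxx] at hL
      rw [Real.sq_sqrt (one_sub_inv_nonneg _ ha1)] at hL
      have ha0 : (0:ℝ) < ‖E‖ ^ 2 := by nlinarith
      have h2 : ‖Q x‖ ^ 2 ≤ ‖E‖ ^ 2 * ‖x‖ ^ 2 := by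
        have h3 : (‖E‖ ^ 2)⁻¹ * ‖Q x‖ ^ 2 ≤ ‖x‖ ^ 2 := by nlinarith
        calc ‖Q x‖ ^ 2 = ‖E‖ ^ 2 * ((‖E‖ ^ 2)⁻¹ * ‖Q x‖ ^ 2) := by field_simp
          _ ≤ ‖E‖ ^ 2 * ‖x‖ ^ 2 := mul_le_mul_of_nonneg_left h3 (le_of_lt ha0)
      have h4 := sq_le_imp (‖E‖ ^ 2) ‖Q x‖ ‖x‖ (by positivity) (norm_nonneg _)
        (norm_nonneg _) h2
      rwa [Real.sqrt_sq (by linarith)] at h4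
    have haeqb : ‖Q‖ = ‖E‖ := le_antisymm hba hab
    -- upper bound for the difference of projections
    have upper : ∀ x, ‖(orthProj M - orthProj N) x‖ ^ 2 ≤ (1 - (‖E‖ ^ 2)⁻¹) * ‖x‖ ^ 2 := by
      intro x
      set n := orthProj N x with hn
      set k0 := x - orthProj N x with hk0
      have hk0K : k0 ∈ Nᗮ := sub_orthProj_mem N x
      have hnN : n ∈ N := orthProj_mem N x
      set u := orthProj M k0 with hu
      set w := n - orthProj M n with hw
      have hDx : (orthProj M - orthProj N) x = u - w := by
        have hxkn : x = k0 + n := by rw [hk0, hn]; abel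
        calc (orthProj M - orthProj N) x = orthProj M x - n := by
              rw [ContinuousLinearMap.sub_apply, ← hn]
          _ = orthProj M (k0 + n) - n := by rw [← hxkn]
          _ = u - w := by rw [map_add, ← hu, hw]; abel
      have huM : u ∈ M := orthProj_mem M k0
      have hwMp : w ∈ Mᗮ := sub_orthProj_mem M n
      have horth : ⟪u, w⟫ = 0 := (Submodule.mem_orthogonal M w).mp hwMp u huM
      have hpyth : ‖u - w‖ ^ 2 = ‖u‖ ^ 2 + ‖w‖ ^ 2 := by
        rw [norm_sub_sq_real, horth]; ring
      have hub : ‖u‖ ^ 2 ≤ (1 - (‖E‖ ^ 2)⁻¹) * ‖k0‖ ^ 2 := by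
        have := step1 k0 hk0K
        rwa [haeqb] at this
      have hwb : ‖w‖ ^ 2 ≤ (1 - (‖E‖ ^ 2)⁻¹) * ‖n‖ ^ 2 := by
        set E2 := ContinuousLinearMap.adjoint E with hE2
        have hE2norm : ‖E2‖ = ‖E‖ := LinearIsometryEquiv.norm_map ContinuousLinearMap.adjoint E
        have hE2n : E2 n = 0 := by
          apply ext_inner_right ℝ
          intro y
          rw [hE2, ContinuousLinearMap.adjoint_inner_left, inner_zero_left, hEapp]
          rw [real_inner_comm]
          exact (Submodule.mem_orthogonal Nᗮ n).mp
            (Submodule.le_orthogonal_orthogonal N hnN) _ (hsubK y)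
        have hE2w : E2 w = w := by
          apply ext_inner_right ℝ
          intro y
          rw [hE2, ContinuousLinearMap.adjoint_inner_left, hEapp, inner_sub_right]
          have hz : ⟪w, Q y⟫ = 0 := by
            rw [real_inner_comm]
            exact (Submodule.mem_orthogonal M w).mp hwMp _ (hQM y)
          rw [hz, sub_zero]
        have hwn : ⟪w, n⟫ = ‖w‖ ^ 2 := by
          have h5 : ⟪w, orthProj M n⟫ = 0 := by
            rw [real_inner_comm]
            exact (Submodule.mem_orthogonal M w).mp hwMp _ (orthProj_mem M n)
          have h6 : n = w + orthProj M n := by rw [hw]; abel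
          calc ⟪w, n⟫ = ⟪w, w + orthProj M n⟫ := by rw [← h6]
            _ = ‖w‖ ^ 2 := by
                rw [inner_add_right, h5, real_inner_self_eq_norm_sq]; ring
        have := aux_L2 E2 (by rw [hE2norm]; exact ha1) n w hE2n hE2w hwn
        rwa [hE2norm] at this
      have hxpyth : ‖k0‖ ^ 2 + ‖n‖ ^ 2 = ‖x‖ ^ 2 := by
        have h7 : ⟪k0, n⟫ = 0 := by
          rw [real_inner_comm]
          exact (Submodule.mem_orthogonal N k0).mp hk0K n hnN
        have hxkn : x = k0 + n := by rw [hk0, hn]; abel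
        rw [hxkn, norm_add_sq_real, h7]
        ring
      rw [hDx, hpyth]
      calc ‖u‖ ^ 2 + ‖w‖ ^ 2 ≤ (1 - (‖E‖ ^ 2)⁻¹) * ‖k0‖ ^ 2 + (1 - (‖E‖ ^ 2)⁻¹) * ‖n‖ ^ 2 :=
            add_le_add hub hwb
        _ = (1 - (‖E‖ ^ 2)⁻¹) * ‖x‖ ^ 2 := by rw [← hxpyth]; ring
    have hDle : ‖orthProj M - orthProj N‖ ≤ Real.sqrt (1 - (‖E‖ ^ 2)⁻¹) := by
      refine ContinuousLinearMap.opNorm_le_bound _ (Real.sqrt_nonneg _) ?_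
      intro x
      exact sq_le_imp _ _ _ (one_sub_inv_nonneg _ ha1) (norm_nonneg _) (norm_nonneg _) (upper x)
    have hsqlt : Real.sqrt (1 - (‖E‖ ^ 2)⁻¹) < 1 := by
      have h8 : (0:ℝ) < (‖E‖ ^ 2)⁻¹ := by positivity
      have h9 : (1:ℝ) - (‖E‖ ^ 2)⁻¹ < 1 := by linarith
      calc Real.sqrt (1 - (‖E‖ ^ 2)⁻¹) < Real.sqrt 1 :=
            Real.sqrt_lt_sqrt (one_sub_inv_nonneg _ ha1) h9
        _ = 1 := Real.sqrt_one
    have hDlt1 : ‖orthProj M - orthProj N‖ < 1 := lt_of_le_of_lt hDle hsqlt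
    have hlow : Real.sqrt (1 - (‖E‖ ^ 2)⁻¹) ≤ ‖orthProj M - orthProj N‖ := by
      set D := orthProj M - orthProj N with hD
      have hbound : ∀ x, (1 - ‖D‖ ^ 2) * ‖E x‖ ^ 2 ≤ ‖x‖ ^ 2 := by
        intro x
        have hm := hQM x
        have hk := hsubK x
        have h9 : ⟪Q x, x - Q x⟫ = ⟪D (Q x), x - Q x⟫ := by
          rw [hD, ContinuousLinearMap.sub_apply, orthProj_eq_self M hm, inner_sub_left,
            inner_orthProj, orthProj_eq_zero N hk, inner_zero_right, sub_zero]
        have hin : |⟪x - Q x, Q x⟫| ≤ ‖D‖ * ‖x - Q x‖ * ‖Q x‖ := by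
          rw [real_inner_comm, h9]
          calc |⟪D (Q x), x - Q x⟫| ≤ ‖D (Q x)‖ * ‖x - Q x‖ := abs_real_inner_le_norm _ _
            _ ≤ (‖D‖ * ‖Q x‖) * ‖x - Q x‖ :=
                mul_le_mul_of_nonneg_right (D.le_opNorm _) (norm_nonneg _)
            _ = ‖D‖ * ‖x - Q x‖ * ‖Q x‖ := by ring
        have hL := aux_L1 (x - Q x) (Q x) ‖D‖ hin
        rw [sub_add_cancel] at hL
        rw [hEapp]
        exact hL
      have hden : (0:ℝ) < 1 - ‖D‖ ^ 2 := by nlinarith [norm_nonneg D]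
      have haD : ‖E‖ ≤ Real.sqrt ((1 - ‖D‖ ^ 2)⁻¹) := by
        refine ContinuousLinearMap.opNorm_le_bound _ (Real.sqrt_nonneg _) ?_
        intro x
        refine sq_le_imp _ _ _ (by positivity) (norm_nonneg _) (norm_nonneg _) ?_
        have h10 := hbound x
        calc ‖E x‖ ^ 2 = (1 - ‖D‖ ^ 2)⁻¹ * ((1 - ‖D‖ ^ 2) * ‖E x‖ ^ 2) := by field_simp
          _ ≤ (1 - ‖D‖ ^ 2)⁻¹ * ‖x‖ ^ 2 := mul_le_mul_of_nonneg_left h10 (by positivity)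
      have ha2 : ‖E‖ ^ 2 ≤ (1 - ‖D‖ ^ 2)⁻¹ := by
        have h10 : ‖E‖ ^ 2 ≤ (Real.sqrt ((1 - ‖D‖ ^ 2)⁻¹)) ^ 2 := by
          have h11 : (0:ℝ) ≤ ‖E‖ := norm_nonneg _
          nlinarith [Real.sqrt_nonneg ((1 - ‖D‖ ^ 2)⁻¹)]
        rwa [Real.sq_sqrt (by positivity)] at h10
      have h11 : 1 - ‖D‖ ^ 2 ≤ (‖E‖ ^ 2)⁻¹ := by
        have ha2pos : (0:ℝ) < ‖E‖ ^ 2 := by nlinarith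
        have h12 := inv_anti₀ ha2pos ha2
        rwa [inv_inv] at h12
      have h13 : Real.sqrt (1 - (‖E‖ ^ 2)⁻¹) ≤ Real.sqrt (‖D‖ ^ 2) :=
        Real.sqrt_le_sqrt (by linarith)
      rwa [Real.sqrt_sq (norm_nonneg D)] at h13
    exact le_antisymm hDle hlow

end KeyLemmas

section Main
open scoped RealInnerProductSpace

section Main
open scoped RealInnerProductSpace

variable {X Y : Type*} [NormedAddCommGroup X] [InnerProductSpace ℝ X] [CompleteSpace X]
  [NormedAddCommGroup Y] [InnerProductSpace ℝ Y] [CompleteSpace Y]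

/-- Norm identity relating the oblique projections `Qₙ` and the gap between
`T†T(Xₙ) = P_{N(T)ᗮ}(Xₙ)` and `T*T(Xₙ)`; in particular the gap is `< 1`. -/
theorem stmt16
    (T : X →L[ℝ] Y) (Xn : ℕ → Submodule ℝ X)
    (hfin : ∀ n, FiniteDimensional ℝ (Xn n))
    (hinf : ¬ FiniteDimensional ℝ X)
    (hproj : ∀ x : X, Tendsto (fun n => orthProj (Xn n) x) atTop (𝓝 x))
    (Tn : ℕ → X →L[ℝ] Y) (hTn : ∀ n, Tn n = T.comp (orthProj (Xn n)))
    (Qn : ℕ → X →L[ℝ] X)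
    (hQn : ∀ n (x : X), Qn n x ∈ (LinearMap.ker (T : X →ₗ[ℝ] Y))ᗮ ∧
      T (Qn n x) = orthProj ((Xn n).map (T : X →ₗ[ℝ] Y)) (T x)) :
    ∀ n,
      (1 ≤ ‖(1 : X →L[ℝ] X) - Qn n‖) ∧
      (‖orthProj ((Xn n).map ((ContinuousLinearMap.adjoint T).comp T : X →ₗ[ℝ] X)) -
          orthProj ((Xn n).map (orthProj ((LinearMap.ker (T : X →ₗ[ℝ] Y))ᗮ) : X →ₗ[ℝ] X))‖
        = Real.sqrt (1 - (‖(1 : X →L[ℝ] X) - Qn n‖ ^ 2)⁻¹)) ∧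
      (Real.sqrt (1 - (‖(1 : X →L[ℝ] X) - Qn n‖ ^ 2)⁻¹) < 1) ∧
      (gapSub ((Xn n).map (orthProj ((LinearMap.ker (T : X →ₗ[ℝ] Y))ᗮ) : X →ₗ[ℝ] X))
        ((Xn n).map ((ContinuousLinearMap.adjoint T).comp T : X →ₗ[ℝ] X)) < 1) := by
  intro n
  haveI := hfin n
  haveI : Nontrivial X := by
    rcases subsingleton_or_nontrivial X with h | h
    · exact absurd (inferInstance : FiniteDimensional ℝ X) hinf
    · exact h
  -- the kernel of T and its complement
  have hclosed : IsClosed ((LinearMap.ker (T : X →ₗ[ℝ] Y) : Submodule ℝ X) : Set X) := ContinuousLinearMap.isClosed_ker T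
  haveI : CompleteSpace (LinearMap.ker (T : X →ₗ[ℝ] Y) : Submodule ℝ X) := hclosed.completeSpace_coe
  have hker'' : (LinearMap.ker (T : X →ₗ[ℝ] Y) : Submodule ℝ X)ᗮᗮ = LinearMap.ker (T : X →ₗ[ℝ] Y) :=
    Submodule.orthogonal_orthogonal _
  set Q : X →L[ℝ] X := Qn n with hQdef
  set M : Submodule ℝ X := (Xn n).map (orthProj ((LinearMap.ker (T : X →ₗ[ℝ] Y))ᗮ) : X →ₗ[ℝ] X) with hMdef
  set N : Submodule ℝ X := (Xn n).map ((ContinuousLinearMap.adjoint T).comp T : X →ₗ[ℝ] X) with hNdef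
  set TXn : Submodule ℝ Y := (Xn n).map (T : X →ₗ[ℝ] Y) with hTXndef
  haveI hMfd : FiniteDimensional ℝ M := by
    have h : M = (Xn n).map ((orthProj ((LinearMap.ker (T : X →ₗ[ℝ] Y))ᗮ)) : X →ₗ[ℝ] X) := rfl
    rw [h]; infer_instance
  haveI hNfd : FiniteDimensional ℝ N := by
    have h : N = (Xn n).map (((ContinuousLinearMap.adjoint T).comp T) : X →ₗ[ℝ] X) := rfl
    rw [h]; infer_instance
  haveI hTXnfd : FiniteDimensional ℝ TXn := by
    have h : TXn = (Xn n).map (T : X →ₗ[ℝ] Y) := rfl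
    rw [h]; infer_instance
  -- injectivity of T on (ker T)ᗮ
  have hinj : ∀ u v, u ∈ (LinearMap.ker (T : X →ₗ[ℝ] Y))ᗮ → v ∈ (LinearMap.ker (T : X →ₗ[ℝ] Y))ᗮ → T u = T v → u = v := by
    intro u v hu hv huv
    have hsub : u - v ∈ LinearMap.ker (T : X →ₗ[ℝ] Y) := LinearMap.mem_ker.mpr (by rw [map_sub]; exact sub_eq_zero.mpr huv)
    have hsub2 : u - v ∈ (LinearMap.ker (T : X →ₗ[ℝ] Y))ᗮ := Submodule.sub_mem _ hu hv
    have h0 : ⟪u - v, u - v⟫ = 0 :=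
      (Submodule.mem_orthogonal _ _).mp hsub2 (u - v) hsub
    exact sub_eq_zero.mp (inner_self_eq_zero.mp h0)
  have hTP : ∀ z : X, T (orthProj ((LinearMap.ker (T : X →ₗ[ℝ] Y))ᗮ) z) = T z := by
    intro z
    have h1 : z - orthProj ((LinearMap.ker (T : X →ₗ[ℝ] Y))ᗮ) z ∈ (LinearMap.ker (T : X →ₗ[ℝ] Y))ᗮᗮ :=
      sub_orthProj_mem _ z
    rw [hker''] at h1
    have h2 : T (z - orthProj ((LinearMap.ker (T : X →ₗ[ℝ] Y))ᗮ) z) = 0 := LinearMap.mem_ker.mp h1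
    rw [map_sub] at h2
    exact (sub_eq_zero.mp h2).symm
  have hQmem : ∀ x, Q x ∈ (LinearMap.ker (T : X →ₗ[ℝ] Y))ᗮ := fun x => (hQn n x).1
  have hQT : ∀ x, T (Q x) = orthProj TXn (T x) := fun x => (hQn n x).2
  -- F3 : range of Q lies in M
  have hQM : ∀ x, Q x ∈ M := by
    intro x
    obtain ⟨z, hz, hz2⟩ := Submodule.mem_map.mp (orthProj_mem TXn (T x))
    have h3 : T (orthProj ((LinearMap.ker (T : X →ₗ[ℝ] Y))ᗮ) z) = T (Q x) := by
      rw [hTP]; exact hz2.trans (hQT x).symm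
    have h4 := hinj _ _ (orthProj_mem _ z) (hQmem x) h3
    rw [← h4]
    exact Submodule.mem_map_of_mem hz
  -- F2 : Q fixes M
  have hMfix : ∀ m ∈ M, Q m = m := by
    intro m hm
    obtain ⟨z, hz, rfl⟩ := Submodule.mem_map.mp hm
    apply hinj _ _ (hQmem _) (orthProj_mem _ z)
    rw [hQT]; change orthProj TXn (T (orthProj ((LinearMap.ker (T : X →ₗ[ℝ] Y))ᗮ) z)) = T (orthProj ((LinearMap.ker (T : X →ₗ[ℝ] Y))ᗮ) z); rw [hTP]; exact orthProj_eq_self TXn (Submodule.mem_map_of_mem hz)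
  -- F4 : kernel of Q is Nᗮ
  have horthTx : ∀ x : X, T x ∈ TXnᗮ ↔ x ∈ Nᗮ := by
    intro x
    constructor
    · intro h
      rw [Submodule.mem_orthogonal]
      rintro u hu
      obtain ⟨z, hz, rfl⟩ := Submodule.mem_map.mp hu
      have heq : ((ContinuousLinearMap.adjoint T).comp T) z
          = ContinuousLinearMap.adjoint T (T z) := rfl
      change ⟪((ContinuousLinearMap.adjoint T).comp T) z, x⟫ = 0; rw [heq, ContinuousLinearMap.adjoint_inner_left]
      exact (Submodule.mem_orthogonal TXn (T x)).mp h _ (Submodule.mem_map_of_mem hz)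
    · intro h
      rw [Submodule.mem_orthogonal]
      rintro u hu
      obtain ⟨z, hz, rfl⟩ := Submodule.mem_map.mp hu
      rw [← ContinuousLinearMap.adjoint_inner_left]
      exact (Submodule.mem_orthogonal N x).mp h _ (Submodule.mem_map_of_mem hz)
  have hkerQ : ∀ x, Q x = 0 ↔ x ∈ Nᗮ := by
    intro x
    rw [← horthTx]
    constructor
    · intro h
      have h1 : T (Q x) = 0 := by rw [h, map_zero]
      rw [hQT] at h1
      have h2 : T x - orthProj TXn (T x) ∈ TXnᗮ := sub_orthProj_mem _ _
      rwa [h1, sub_zero] at h2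
    · intro h
      have h1 : T (Q x) = T 0 := by
        rw [hQT, orthProj_eq_zero TXn h, map_zero]
      exact hinj _ _ (hQmem x) (Submodule.zero_mem _) h1
  -- Q ≠ 1
  have hQ1 : Q ≠ 1 := by
    intro h
    have hall : ∀ x : X, x ∈ M := by
      intro x
      have := hQM x
      rwa [h, ContinuousLinearMap.one_apply] at this
    have htop : M = ⊤ := Submodule.eq_top_iff'.mpr hall
    exact hinf (Module.Finite.equiv (LinearEquiv.ofTop M htop))
  obtain ⟨h1, h2⟩ := buck Q M N hQM hMfix hkerQ hQ1
  have hsqlt : Real.sqrt (1 - (‖(1 : X →L[ℝ] X) - Q‖ ^ 2)⁻¹) < 1 := by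
    have h8 : (0:ℝ) < (‖(1 : X →L[ℝ] X) - Q‖ ^ 2)⁻¹ := by positivity
    calc Real.sqrt (1 - (‖(1 : X →L[ℝ] X) - Q‖ ^ 2)⁻¹) < Real.sqrt 1 :=
          Real.sqrt_lt_sqrt (one_sub_inv_nonneg _ h1) (by linarith)
      _ = 1 := Real.sqrt_one
  have h2' : ‖orthProj N - orthProj M‖
      = Real.sqrt (1 - (‖(1 : X →L[ℝ] X) - Q‖ ^ 2)⁻¹) := by
    rw [← h2, norm_sub_rev]
  refine ⟨h1, h2', hsqlt, ?_⟩
  -- the gap bound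
  have hdMN : deltaSub M N ≤ Real.sqrt (1 - (‖(1 : X →L[ℝ] X) - Q‖ ^ 2)⁻¹) := by
    apply Real.sSup_le _ (Real.sqrt_nonneg _)
    rintro d ⟨x, hxM, hx1, rfl⟩
    have hmem : orthProj N x ∈ (N : Set X) := orthProj_mem N x
    have hle1 : Metric.infDist x (N : Set X) ≤ dist x (orthProj N x) :=
      Metric.infDist_le_dist_of_mem hmem
    rw [dist_eq_norm] at hle1
    have heq2 : x - orthProj N x = (orthProj M - orthProj N) x := by
      rw [ContinuousLinearMap.sub_apply, orthProj_eq_self M hxM]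
    calc Metric.infDist x (N : Set X) ≤ ‖x - orthProj N x‖ := hle1
      _ = ‖(orthProj M - orthProj N) x‖ := by rw [heq2]
      _ ≤ ‖orthProj M - orthProj N‖ * ‖x‖ := ContinuousLinearMap.le_opNorm _ _
      _ = ‖orthProj M - orthProj N‖ := by rw [hx1, mul_one]
      _ = Real.sqrt (1 - (‖(1 : X →L[ℝ] X) - Q‖ ^ 2)⁻¹) := h2
  have hdNM : deltaSub N M ≤ Real.sqrt (1 - (‖(1 : X →L[ℝ] X) - Q‖ ^ 2)⁻¹) := by
    apply Real.sSup_le _ (Real.sqrt_nonneg _)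
    rintro d ⟨x, hxN, hx1, rfl⟩
    have hmem : orthProj M x ∈ (M : Set X) := orthProj_mem M x
    have hle1 : Metric.infDist x (M : Set X) ≤ dist x (orthProj M x) :=
      Metric.infDist_le_dist_of_mem hmem
    rw [dist_eq_norm] at hle1
    have heq2 : x - orthProj M x = (orthProj N - orthProj M) x := by
      rw [ContinuousLinearMap.sub_apply, orthProj_eq_self N hxN]
    calc Metric.infDist x (M : Set X) ≤ ‖x - orthProj M x‖ := hle1
      _ = ‖(orthProj N - orthProj M) x‖ := by rw [heq2]
      _ ≤ ‖orthProj N - orthProj M‖ * ‖x‖ := ContinuousLinearMap.le_opNorm _ _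
      _ = ‖orthProj N - orthProj M‖ := by rw [hx1, mul_one]
      _ = Real.sqrt (1 - (‖(1 : X →L[ℝ] X) - Q‖ ^ 2)⁻¹) := h2'
  exact max_lt (lt_of_le_of_lt hdMN hsqlt) (lt_of_le_of_lt hdNM hsqlt)

end Main
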